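/- Let g(z) = z² · (α − z)/(1 − conj(α)z) for α in the open unit disk. Then g(1) = g(i) if and only if |α − (1+i)| = 1, i.e., α lies on the circle of radius 1 centered at 1+i. -/

import Mathlib

open Complex

/-- For `g(z) = z² (α − z)/(1 − conj α · z)` with `|α| < 1`, one has `g(1) = g(i)`
if and only if `α` lies on the circle of radius `1` centered at `1 + i`. -/
theorem stmt_5 (α : ℂ) (hα : ‖α‖ < 1) (g : ℂ → ℂ)
    (hg : ∀ z : ℂ, g z = z ^ 2 * ((α - z) / (1 - (starRingEnd ℂ) α * z))) :
    g 1 = g Complex.I ↔ ‖α - (1 + Complex.I)‖ = 1 := by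
  have h1 : (1 : ℂ) - (starRingEnd ℂ) α * 1 ≠ 0 := by
    intro h
    have : (starRingEnd ℂ) α * 1 = 1 := by linear_combination -h
    have := congrArg (fun x : ℂ => ‖x‖) this
    simp at this
    linarith
  have h2 : (1 : ℂ) - (starRingEnd ℂ) α * Complex.I ≠ 0 := by
    intro h
    have : (starRingEnd ℂ) α * Complex.I = 1 := by linear_combination -h
    have := congrArg (fun x : ℂ => ‖x‖) this
    simp at this
    linarith
  have key : g 1 = g Complex.I ↔
      (α - 1) * (1 - (starRingEnd ℂ) α * Complex.I)
        = (Complex.I ^ 2 * (α - Complex.I)) * (1 - (starRingEnd ℂ) α * 1) := by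
    rw [hg, hg, one_pow, one_mul, ← mul_div_assoc, div_eq_div_iff h1 h2]
  rw [key]
  have habs : ‖α - (1 + Complex.I)‖ = 1 ↔
      Complex.normSq (α - (1 + Complex.I)) = 1 := by
    rw [← Complex.sq_norm]
    constructor
    · intro h; rw [h]; norm_num
    · intro h
      nlinarith [norm_nonneg (α - (1 + Complex.I))]
  rw [habs, Complex.ext_iff, Complex.normSq_apply]
  simp only [Complex.I_sq, Complex.mul_re, Complex.mul_im, Complex.sub_re, Complex.sub_im,
    Complex.one_re, Complex.one_im, Complex.I_re, Complex.I_im, Complex.conj_re, Complex.conj_im,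
    Complex.add_re, Complex.add_im, Complex.neg_re, Complex.neg_im, mul_one]
  constructor
  · rintro ⟨hre, him⟩
    nlinarith [hre, him]
  · intro h
    constructor <;> nlinarith [h]
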